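/- The conjunction connective is not definable from ¬, ∨, →, ⊤ in Gödel–Dummett logic: there is no formula θ in the fragment L(¬, ∨, →, ⊤; p, q) such that θ is forced at exactly the same nodes as p ∧ q in every connected finite Kripke model. In particular, in the 3-node connected model with b ≽ a, b ≽ c, a ⊩ p only, c ⊩ q only, b ⊩ p, q, no such θ agrees with p ∧ q (since b forces p∧q but neither a nor c does, while any ∧-free θ forced at b is forced at a or at c). -/
import Mathlib


inductive Fm (α : Type) : Type where
  | top  : Fm α
  | atom : α → Fm α
  | neg  : Fm α → Fm α
  | and  : Fm α → Fm α → Fm α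
  | or   : Fm α → Fm α → Fm α
  | imp  : Fm α → Fm α → Fm α

structure KripkeModel (α : Type) : Type 1 where
  K : Type
  le : K → K → Prop
  refl : ∀ k, le k k
  trans : ∀ {a b c}, le a b → le b c → le a c
  antisymm : ∀ {a b}, le a b → le b a → a = b
  val : K → α → Prop
  persist : ∀ {k k' p}, le k k' → val k p → val k' p

def force {α : Type} (M : KripkeModel α) : M.K → Fm α → Prop
  | _, .top => True
  | k, .atom p => M.val k p
  | k, .neg φ => ∀ k', M.le k k' → ¬ force M k' φ
  | k, .and φ ψ => force M k φ ∧ force M k ψ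
  | k, .or φ ψ => force M k φ ∨ force M k ψ
  | k, .imp φ ψ => ∀ k', M.le k k' → force M k' φ → force M k' ψ

/-- ∧-free formulas: built using only ¬, ∨, →, ⊤ and atoms. -/
def NoAnd {α : Type} : Fm α → Prop
  | .top => True
  | .atom _ => True
  | .neg φ => NoAnd φ
  | .and _ _ => False
  | .or φ ψ => NoAnd φ ∧ NoAnd ψ
  | .imp φ ψ => NoAnd φ ∧ NoAnd ψ

/-- A Kripke model is connected when any two nodes above a common node are
comparable. -/
def Connected {α : Type} (M : KripkeModel α) : Prop :=
  ∀ k k' k'' : M.K, M.le k k' → M.le k k'' → M.le k' k'' ∨ M.le k'' k'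

/-- Persistence (monotonicity) of forcing. -/
lemma force_mono {α : Type} (M : KripkeModel α) : ∀ (φ : Fm α) {k k' : M.K},
    M.le k k' → force M k φ → force M k' φ := by
  intro φ
  induction φ with
  | top => intro k k' _ _; trivial
  | atom p => intro k k' h hf; exact M.persist h hf
  | neg φ ih => intro k k' h hf k'' h' ; exact hf k'' (M.trans h h')
  | and φ ψ ih1 ih2 => intro k k' h hf; exact ⟨ih1 h hf.1, ih2 h hf.2⟩
  | or φ ψ ih1 ih2 =>
      intro k k' h hf
      rcases hf with hf | hf
      · exact Or.inl (ih1 h hf)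
      · exact Or.inr (ih2 h hf)
  | imp φ ψ ih1 ih2 => intro k k' h hf k'' h' hφ; exact hf k'' (M.trans h h') hφ

/-- The 3-node model: 0 ≤ 1, 2 ≤ 1; 0 ⊩ p, 2 ⊩ q, 1 ⊩ p,q. -/
abbrev M3 : KripkeModel (Fin 2) where
  K := Fin 3
  le x y := x = y ∨ y = 1
  refl k := Or.inl rfl
  trans := by
    rintro a b c (rfl | rfl) h
    · exact h
    · rcases h with rfl | h
      · exact Or.inr rfl
      · exact Or.inr h
  antisymm := by
    rintro a b (rfl | rfl) h
    · rfl
    · rcases h with h | h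
      · exact h.symm
      · exact h
  val k i := k = 1 ∨ (i = 0 ∧ k = 0) ∨ (i = 1 ∧ k = 2)
  persist := by
    rintro k k' p (rfl | rfl) h
    · exact h
    · exact Or.inl rfl

lemma M3_le (x y : Fin 3) : M3.le x y ↔ (x = y ∨ y = 1) := Iff.rfl

lemma key : ∀ θ : Fm (Fin 2), NoAnd θ → force M3 1 θ →
    force M3 0 θ ∨ force M3 2 θ := by
  intro θ
  induction θ with
  | top => intro _ _; exact Or.inl trivial
  | atom p =>
      intro _ h
      fin_cases p
      · exact Or.inl (Or.inr (Or.inl ⟨rfl, rfl⟩))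
      · exact Or.inr (Or.inr (Or.inr ⟨rfl, rfl⟩))
  | neg φ ih =>
      intro hn hf
      left
      intro k' hk' hφ
      exact hf 1 (Or.inr rfl) (force_mono M3 φ (Or.inr rfl) hφ)
  | and φ ψ ih1 ih2 => intro hn; exact absurd hn (by simp [NoAnd])
  | or φ ψ ih1 ih2 =>
      intro hn hf
      rcases hf with hf | hf
      · rcases ih1 hn.1 hf with h | h
        · exact Or.inl (Or.inl h)
        · exact Or.inr (Or.inl h)
      · rcases ih2 hn.2 hf with h | h
        · exact Or.inl (Or.inr h)
        · exact Or.inr (Or.inr h)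
  | imp φ ψ ih1 ih2 =>
      intro hn hf
      by_contra hcon
      push_neg at hcon
      obtain ⟨h0, h2⟩ := hcon
      -- extract failures at 0 and 2
      have e0 : ∃ k', M3.le (0 : Fin 3) k' ∧ force M3 k' φ ∧ ¬ force M3 k' ψ := by
        by_contra h; push_neg at h
        exact h0 h
      have e2 : ∃ k', M3.le (2 : Fin 3) k' ∧ force M3 k' φ ∧ ¬ force M3 k' ψ := by
        by_contra h; push_neg at h
        exact h2 h
      obtain ⟨k0, hk0, hφ0, hψ0⟩ := e0
      obtain ⟨k2, hk2, hφ2, hψ2⟩ := e2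
      -- k0 ∈ {0,1}, k2 ∈ {2,1}; if either is 1, contradiction with hf
      have hb : ∀ k : Fin 3, force M3 k φ → ¬ force M3 k ψ → k ≠ 1 := by
        intro k hφ hψ hk1
        subst hk1
        exact hψ (hf 1 (Or.inl rfl) hφ)
      rcases hk0 with rfl | h1
      · rcases hk2 with rfl | h1
        · -- φ at 0 and at 2, ψ not at 0, 2
          have hφ1 : force M3 (1 : Fin 3) φ := force_mono M3 φ (Or.inr rfl) hφ0
          have hψ1 : force M3 (1 : Fin 3) ψ := hf 1 (Or.inl rfl) hφ1
          rcases ih2 hn.2 hψ1 with h | h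
          · exact hψ0 h
          · exact hψ2 h
        · exact hb k2 hφ2 hψ2 h1
      · exact hb k0 hφ0 hψ0 h1

/-- Conjunction is not definable from ¬, ∨, →, ⊤ in Gödel–Dummett logic: no
∧-free formula in the atoms p = 0, q = 1 is forced at exactly the same nodes as
p ∧ q in every connected finite Kripke model. -/
theorem and_not_definable_GDL :
    ¬ ∃ θ : Fm (Fin 2), NoAnd θ ∧
      ∀ (M : KripkeModel (Fin 2)), Fintype M.K → Connected M →
        ∀ k : M.K, (force M k θ ↔ force M k (Fm.and (Fm.atom 0) (Fm.atom 1))) := by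
  rintro ⟨θ, hθ, h⟩
  have conn : Connected M3 := by
    rintro k k' k'' (rfl | rfl) h2
    · rcases h2 with rfl | rfl
      · exact Or.inl (Or.inl rfl)
      · exact Or.inl (Or.inr rfl)
    · exact Or.inr (Or.inr rfl)
  have hfin : Fintype M3.K := by
    show Fintype (Fin 3); infer_instance
  have h := h M3 hfin conn
  have h1 : force M3 (1 : Fin 3) θ := by
    refine (h 1).2 ⟨Or.inl rfl, Or.inl rfl⟩
  rcases key θ hθ h1 with h0 | h2
  · have := (h 0).1 h0
    rcases this.2 with e | e | e
    · exact absurd e (by decide)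
    · exact absurd e.1 (by decide)
    · exact absurd e.2 (by decide)
  · have := (h 2).1 h2
    rcases this.1 with e | e | e
    · exact absurd e (by decide)
    · exact absurd e.2 (by decide)
    · exact absurd e.1 (by decide)
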